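/- arXiv:1807.04195 — 3 statements merged into one kernel-verified Lean document; each statement's English description precedes it below -/
import Mathlib

section
/- Let w be a nonnegative weight on ℝ and w₁(t) = (1+t²)w(t). Define, on the two-branch hyperbola x² − y² = 1, the inner product ⟨f,g⟩ = ∫_ℝ [f(√(y²+1),y)g(√(y²+1),y) + f(−√(y²+1),y)g(−√(y²+1),y)] w(y) dy. Then Y_{n,1}(x,y) = p_n(w; y) and Y_{n,2}(x,y) = x·p_{n-1}(w₁; y) satisfy ⟨Y_{n,1}, Y_{m,2}⟩ = 0 for all n,m, ⟨Y_{n,1}, Y_{m,1}⟩ = 2h_n(w)δ_{n,m}, and ⟨Y_{n,2}, Y_{m,2}⟩ = 2h_{n-1}(w₁)δ_{n,m}. -/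
open MeasureTheory Real

/-- Orthogonal basis on the two-branch hyperbola `x² − y² = 1`:
`Y_{n,1}(x,y) = p_n(w; y)`, `Y_{n,2}(x,y) = x·p_{n-1}(w₁; y)` with `w₁(t) = (1+t²)w(t)`,
for the inner product summing over the two branches `x = ±√(y²+1)`. -/
theorem stmt_8 (w : ℝ → ℝ) (hw_nonneg : ∀ t, 0 ≤ w t)
    (p q : ℕ → Polynomial ℝ)
    (hpdeg : ∀ n, (p n).degree = (n : ℕ))
    (hqdeg : ∀ n, (q n).degree = (n : ℕ))
    (hporth : ∀ n, ∀ r : Polynomial ℝ, r.degree < (n : ℕ) →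
      ∫ y : ℝ, (p n).eval y * r.eval y * w y = 0)
    (hqorth : ∀ n, ∀ r : Polynomial ℝ, r.degree < (n : ℕ) →
      ∫ y : ℝ, (q n).eval y * r.eval y * ((1 + y^2) * w y) = 0) :
    (∀ n m : ℕ, 1 ≤ m →
      ∫ y : ℝ,
        ((p n).eval y * (Real.sqrt (y^2 + 1) * (q (m - 1)).eval y)
          + (p n).eval y * (-Real.sqrt (y^2 + 1) * (q (m - 1)).eval y)) * w y = 0)
    ∧ (∀ n m : ℕ,
      ∫ y : ℝ, ((p n).eval y * (p m).eval y + (p n).eval y * (p m).eval y) * w y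
        = if n = m then 2 * ∫ y : ℝ, ((p n).eval y)^2 * w y else 0)
    ∧ (∀ n m : ℕ, 1 ≤ n → 1 ≤ m →
      ∫ y : ℝ,
        ((Real.sqrt (y^2 + 1) * (q (n - 1)).eval y)
            * (Real.sqrt (y^2 + 1) * (q (m - 1)).eval y)
          + (-Real.sqrt (y^2 + 1) * (q (n - 1)).eval y)
            * (-Real.sqrt (y^2 + 1) * (q (m - 1)).eval y)) * w y
        = if n = m then 2 * ∫ y : ℝ, ((q (n - 1)).eval y)^2 * ((1 + y^2) * w y)
          else 0) := by
  refine ⟨?_, ?_, ?_⟩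
  · intro n m hm
    have h0 : ∀ y : ℝ, ((p n).eval y * (Real.sqrt (y^2 + 1) * (q (m - 1)).eval y)
          + (p n).eval y * (-Real.sqrt (y^2 + 1) * (q (m - 1)).eval y)) * w y = 0 := by
      intro y; ring
    simp [h0]
  · intro n m
    have key : ∀ y : ℝ, ((p n).eval y * (p m).eval y + (p n).eval y * (p m).eval y) * w y
        = 2 * ((p n).eval y * (p m).eval y * w y) := fun y => by ring
    simp_rw [key, MeasureTheory.integral_const_mul]
    by_cases h : n = m
    · subst h
      simp [sq]
    · simp only [h, if_false]
      rcases lt_or_gt_of_ne h with hlt | hlt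
      · have := hporth m (p n) (by rw [hpdeg n]; exact_mod_cast hlt)
        rw [show (∫ y : ℝ, (p n).eval y * (p m).eval y * w y)
            = ∫ y : ℝ, (p m).eval y * (p n).eval y * w y from by
          congr 1; funext y; ring]
        rw [this, mul_zero]
      · have := hporth n (p m) (by rw [hpdeg m]; exact_mod_cast hlt)
        rw [this, mul_zero]
  · intro n m hn hm
    have key : ∀ y : ℝ,
        ((Real.sqrt (y^2 + 1) * (q (n - 1)).eval y)
            * (Real.sqrt (y^2 + 1) * (q (m - 1)).eval y)
          + (-Real.sqrt (y^2 + 1) * (q (n - 1)).eval y)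
            * (-Real.sqrt (y^2 + 1) * (q (m - 1)).eval y)) * w y
        = 2 * ((q (n - 1)).eval y * (q (m - 1)).eval y * ((1 + y^2) * w y)) := by
      intro y
      have h : Real.sqrt (y^2 + 1) * Real.sqrt (y^2 + 1) = y^2 + 1 :=
        Real.mul_self_sqrt (by positivity)
      linear_combination (2 * (q (n - 1)).eval y * (q (m - 1)).eval y * w y) * h
    simp_rw [key, MeasureTheory.integral_const_mul]
    by_cases h : n = m
    · subst h
      simp [sq]
    · simp only [h, if_false]
      have h' : n - 1 ≠ m - 1 := by omega
      rcases lt_or_gt_of_ne h' with hlt | hlt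
      · have := hqorth (m - 1) (q (n - 1)) (by rw [hqdeg (n-1)]; exact_mod_cast hlt)
        rw [show (∫ y : ℝ, (q (n-1)).eval y * (q (m-1)).eval y * ((1 + y^2) * w y))
            = ∫ y : ℝ, (q (m-1)).eval y * (q (n-1)).eval y * ((1 + y^2) * w y) from by
          congr 1; funext y; ring]
        rw [this, mul_zero]
      · have := hqorth (n - 1) (q (m - 1)) (by rw [hqdeg (m-1)]; exact_mod_cast hlt)
        rw [this, mul_zero]
end

section
/- Let f be a function on ℝ. The change of variables y ↦ ±y, x = √(1+y²) gives: ∫_{-∞}^{∞} f(√(1+y²), y) dy = ∫_{1}^{∞} [f(x, −√(x²−1)) + f(x, √(x²−1))]·x/√(x²−1) dx, provided the integrals exist. -/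
open MeasureTheory Real Set

lemma aux_deriv {x : ℝ} (hx : x ∈ Set.Ioi (1:ℝ)) :
    HasDerivWithinAt (fun x : ℝ => Real.sqrt (x^2 - 1)) (x / Real.sqrt (x^2 - 1))
      (Set.Ioi 1) x := by
  have hx1 : (1:ℝ) < x := hx
  have h1 : (0:ℝ) < x^2 - 1 := by nlinarith
  have hs : 0 < Real.sqrt (x^2 - 1) := Real.sqrt_pos.2 h1
  have h := (Real.hasDerivAt_sqrt h1.ne').comp x
    (((hasDerivAt_pow 2 x).sub_const 1))
  have e : x / Real.sqrt (x^2 - 1) = 1 / (2 * Real.sqrt (x ^ 2 - 1)) * ((2:ℕ) * x ^ (2 - 1)) := by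
    field_simp
    norm_num
    ring
  rw [e]
  exact h.hasDerivWithinAt

lemma aux_inj : Set.InjOn (fun x : ℝ => Real.sqrt (x^2 - 1)) (Set.Ioi 1) := by
  intro a ha b hb h
  simp only [Set.mem_Ioi] at ha hb
  have h1 : (0:ℝ) ≤ a^2 - 1 := by nlinarith
  have h2 : (0:ℝ) ≤ b^2 - 1 := by nlinarith
  have := (Real.sqrt_inj h1 h2).1 h
  nlinarith

lemma aux_image : (fun x : ℝ => Real.sqrt (x^2 - 1)) '' (Set.Ioi 1) = Set.Ioi 0 := by
  ext y
  constructor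
  · rintro ⟨x, hx, rfl⟩
    simp only [Set.mem_Ioi] at hx ⊢
    exact Real.sqrt_pos.2 (by nlinarith)
  · intro hy
    simp only [Set.mem_Ioi] at hy
    refine ⟨Real.sqrt (1 + y^2), ?_, ?_⟩
    · simp only [Set.mem_Ioi]
      exact (Real.lt_sqrt (by positivity)).2 (by nlinarith)
    · show Real.sqrt ((Real.sqrt (1 + y^2))^2 - 1) = y
      rw [Real.sq_sqrt (by positivity)]
      simp [Real.sqrt_sq hy.le]

lemma aux_sqrt_comp {x : ℝ} (hx : x ∈ Set.Ioi (1:ℝ)) :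
    Real.sqrt (1 + (Real.sqrt (x^2 - 1))^2) = x := by
  have hx1 : (1:ℝ) < x := hx
  rw [Real.sq_sqrt (by nlinarith)]
  rw [show 1 + (x^2 - 1) = x^2 by ring]
  exact Real.sqrt_sq (by linarith)

/-- Change of variables on the one-branch hyperbola:
`∫_ℝ f(√(1+y²), y) dy = ∫_1^∞ [f(x, −√(x²−1)) + f(x, √(x²−1))]·x/√(x²−1) dx`. -/
theorem stmt_10 (f : ℝ → ℝ → ℝ)
    (hf : Integrable (fun y : ℝ => f (Real.sqrt (1 + y^2)) y)) :
    ∫ y : ℝ, f (Real.sqrt (1 + y^2)) y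
      = ∫ x in Set.Ioi (1:ℝ),
          (f x (-Real.sqrt (x^2 - 1)) + f x (Real.sqrt (x^2 - 1)))
            * (x / Real.sqrt (x^2 - 1)) := by
  set g : ℝ → ℝ := fun y => f (Real.sqrt (1 + y^2)) y with hg
  -- negative branch
  have hderiv' : ∀ x ∈ Set.Ioi (1:ℝ), HasDerivWithinAt
      (fun x : ℝ => -Real.sqrt (x^2 - 1)) (-(x / Real.sqrt (x^2 - 1))) (Set.Ioi 1) x :=
    fun x hx => (aux_deriv hx).neg
  have hinj' : Set.InjOn (fun x : ℝ => -Real.sqrt (x^2 - 1)) (Set.Ioi 1) :=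
    fun a ha b hb h => aux_inj ha hb (by simpa using neg_injective h)
  have himage' : (fun x : ℝ => -Real.sqrt (x^2 - 1)) '' (Set.Ioi 1) = Set.Iio 0 := by
    have : (fun x : ℝ => -Real.sqrt (x^2 - 1)) = (fun y => -y) ∘ (fun x => Real.sqrt (x^2 - 1)) := rfl
    rw [this, Set.image_comp, aux_image]
    ext y; simp [neg_lt]
  have habs : ∀ x ∈ Set.Ioi (1:ℝ), |x / Real.sqrt (x^2 - 1)| = x / Real.sqrt (x^2 - 1) := by
    intro x hx
    have hx1 : (1:ℝ) < x := hx
    have : (0:ℝ) ≤ x / Real.sqrt (x^2 - 1) := by positivity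
    exact abs_of_nonneg this
  have hgcomp : ∀ x ∈ Set.Ioi (1:ℝ), g (Real.sqrt (x^2 - 1)) = f x (Real.sqrt (x^2 - 1)) := by
    intro x hx; simp only [hg]; rw [aux_sqrt_comp hx]
  have hgcomp' : ∀ x ∈ Set.Ioi (1:ℝ), g (-Real.sqrt (x^2 - 1)) = f x (-Real.sqrt (x^2 - 1)) := by
    intro x hx; simp only [hg]
    rw [neg_sq, aux_sqrt_comp hx]
  have hpos : ∫ y in Set.Ioi (0:ℝ), g y
      = ∫ x in Set.Ioi (1:ℝ), f x (Real.sqrt (x^2 - 1)) * (x / Real.sqrt (x^2 - 1)) := by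
    rw [← aux_image, integral_image_eq_integral_abs_deriv_smul measurableSet_Ioi
      (fun x hx => aux_deriv hx) aux_inj g]
    refine setIntegral_congr_fun measurableSet_Ioi (fun x hx => ?_)
    rw [habs x hx, hgcomp x hx, smul_eq_mul, mul_comm]
  have hneg : ∫ y in Set.Iio (0:ℝ), g y
      = ∫ x in Set.Ioi (1:ℝ), f x (-Real.sqrt (x^2 - 1)) * (x / Real.sqrt (x^2 - 1)) := by
    rw [← himage', integral_image_eq_integral_abs_deriv_smul measurableSet_Ioi hderiv' hinj' g]
    refine setIntegral_congr_fun measurableSet_Ioi (fun x hx => ?_)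
    rw [abs_neg, habs x hx, hgcomp' x hx, smul_eq_mul, mul_comm]
  have hint_pos : IntegrableOn (fun x => f x (Real.sqrt (x^2 - 1)) * (x / Real.sqrt (x^2 - 1)))
      (Set.Ioi 1) := by
    have := (integrableOn_image_iff_integrableOn_abs_deriv_smul measurableSet_Ioi
      (fun x hx => aux_deriv hx) aux_inj g).1 (by rw [aux_image]; exact hf.integrableOn)
    refine this.congr_fun (fun x hx => ?_) measurableSet_Ioi
    dsimp only
    rw [habs x hx, hgcomp x hx, smul_eq_mul, mul_comm]
  have hint_neg : IntegrableOn (fun x => f x (-Real.sqrt (x^2 - 1)) * (x / Real.sqrt (x^2 - 1)))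
      (Set.Ioi 1) := by
    have := (integrableOn_image_iff_integrableOn_abs_deriv_smul measurableSet_Ioi
      hderiv' hinj' g).1 (by rw [himage']; exact hf.integrableOn)
    refine this.congr_fun (fun x hx => ?_) measurableSet_Ioi
    dsimp only
    rw [abs_neg, habs x hx, hgcomp' x hx, smul_eq_mul, mul_comm]
  have hsplit : (∫ y in Set.Iio (0:ℝ), g y) + (∫ y in Set.Ioi (0:ℝ), g y) = ∫ y : ℝ, g y := by
    rw [← integral_Ici_eq_integral_Ioi]
    exact intervalIntegral.integral_Iio_add_Ici hf.integrableOn hf.integrableOn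
  rw [← hsplit, hpos, hneg, ← integral_add hint_neg hint_pos]
  congr 1
  ext x
  ring
end

section
/- Let w_{-1/2} be a weight on [-1,1] and let {t_j}_{j=1}^n, {λ_j}_{j=1}^n be the n-point Gaussian quadrature nodes and weights for w_{-1/2} (nodes being zeros of p_n(w_{-1/2})). Set x_j = t_j, y_j = √(1−t_j²). Then for 1 ≤ k, ℓ ≤ n, the discrete inner product ⟨f,g⟩_n = Σ_j λ_j [f(x_j,y_j)g(x_j,y_j) + f(x_j,−y_j)g(x_j,−y_j)] satisfies ⟨Y_{k,2}, Y_{ℓ,2}⟩_n = 0 for k ≠ ℓ and ⟨Y_{n,2}, Y_{n,2}⟩_n ≠ 0, where Y_{k,2}(x,y) = y·p_{k−1}(w_{1/2}; x) and w_{1/2}(t) = (1−t²)w_{-1/2}(t). -/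
open MeasureTheory Real Finset

/-- Discrete orthogonality of the second family `Y_{k,2}(x,y) = y·p_{k-1}(w_{1/2};x)`
under the discrete inner product built from `n`-point Gaussian quadrature for
`w_{-1/2}` on `[-1,1]` (nodes `t_j` the zeros of `p_n(w_{-1/2})`, weights `λ_j`),
with `y_j = √(1−t_j²)` and `w_{1/2}(t) = (1−t²)·w_{-1/2}(t)`:
`⟨Y_{k,2},Y_{ℓ,2}⟩_n = 0` for `k ≠ ℓ` (`1 ≤ k,ℓ ≤ n`) and `⟨Y_{n,2},Y_{n,2}⟩_n ≠ 0`. -/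
theorem stmt_17 (w : ℝ → ℝ) (hw_nonneg : ∀ t, 0 ≤ w t)
    (p q : ℕ → Polynomial ℝ)
    (hpdeg : ∀ k, (p k).degree = (k : ℕ))
    (hqdeg : ∀ k, (q k).degree = (k : ℕ))
    (hqorth : ∀ k, ∀ r : Polynomial ℝ, r.degree < (k : ℕ) →
      ∫ t in (-1:ℝ)..1, (q k).eval t * r.eval t * ((1 - t^2) * w t) = 0)
    (n : ℕ) (hn : 1 ≤ n)
    (t lam : Fin n → ℝ)
    (ht_mem : ∀ j, t j ∈ Set.Ioo (-1 : ℝ) 1)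
    (ht_zero : ∀ j, (p n).eval (t j) = 0)
    (ht_inj : Function.Injective t)
    (hlam_pos : ∀ j, 0 < lam j)
    (hquad : ∀ r : Polynomial ℝ, r.degree < (2 * n : ℕ) →
      ∫ s in (-1:ℝ)..1, r.eval s * w s = ∑ j, lam j * r.eval (t j)) :
    (∀ k ℓ : ℕ, 1 ≤ k → k ≤ n → 1 ≤ ℓ → ℓ ≤ n → k ≠ ℓ →
      ∑ j, lam j *
        ((Real.sqrt (1 - (t j)^2) * (q (k - 1)).eval (t j))
            * (Real.sqrt (1 - (t j)^2) * (q (ℓ - 1)).eval (t j))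
          + (-Real.sqrt (1 - (t j)^2) * (q (k - 1)).eval (t j))
            * (-Real.sqrt (1 - (t j)^2) * (q (ℓ - 1)).eval (t j))) = 0)
    ∧ (∑ j, lam j *
        ((Real.sqrt (1 - (t j)^2) * (q (n - 1)).eval (t j))
            * (Real.sqrt (1 - (t j)^2) * (q (n - 1)).eval (t j))
          + (-Real.sqrt (1 - (t j)^2) * (q (n - 1)).eval (t j))
            * (-Real.sqrt (1 - (t j)^2) * (q (n - 1)).eval (t j)))) ≠ 0 := by
  have hpos : ∀ j : Fin n, 0 < 1 - (t j)^2 := by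
    intro j
    have h := ht_mem j
    nlinarith [h.1, h.2]
  have hsq : ∀ j : Fin n, (Real.sqrt (1 - (t j)^2))^2 = 1 - (t j)^2 := fun j =>
    Real.sq_sqrt (le_of_lt (hpos j))
  -- rewrite the general summand
  have hform : ∀ (a b : ℕ) (j : Fin n),
      ((Real.sqrt (1 - (t j)^2) * (q a).eval (t j))
          * (Real.sqrt (1 - (t j)^2) * (q b).eval (t j))
        + (-Real.sqrt (1 - (t j)^2) * (q a).eval (t j))
          * (-Real.sqrt (1 - (t j)^2) * (q b).eval (t j)))
      = 2 * (1 - (t j)^2) * ((q a).eval (t j) * (q b).eval (t j)) := by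
    intro a b j
    have habc : ∀ (s A B : ℝ), (s*A)*(s*B) + (-s*A)*(-s*B) = 2*s^2*(A*B) := by
      intros; ring
    rw [habc, hsq j]
  constructor
  · intro k ℓ hk1 hkn hl1 hln hkl
    -- main orthogonality for a > b
    have main : ∀ a b : ℕ, a < n → b < a →
        ∑ j, lam j * (2 * (1 - (t j)^2) * ((q a).eval (t j) * (q b).eval (t j))) = 0 := by
      intro a b han hba
      set R : Polynomial ℝ :=
        Polynomial.C 2 * (1 - Polynomial.X^2) * q a * q b with hR
      have h2 : (1 - Polynomial.X^2 : Polynomial ℝ).degree = 2 := by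
        have h21 : (1 - Polynomial.X^2 : Polynomial ℝ) = -(Polynomial.X^2 - Polynomial.C 1) := by
          rw [Polynomial.C_1]; ring
        rw [h21, Polynomial.degree_neg, Polynomial.degree_X_pow_sub_C (by norm_num)]
        rfl
      have hdeg : R.degree = ((2 + a + b : ℕ) : WithBot ℕ) := by
        rw [hR, Polynomial.degree_mul, Polynomial.degree_mul, Polynomial.degree_mul,
          Polynomial.degree_C (by norm_num : (2:ℝ) ≠ 0), h2, hqdeg a, hqdeg b]
        push_cast
        ring
      have hdeglt : R.degree < ((2 * n : ℕ) : WithBot ℕ) := by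
        rw [hdeg]
        exact_mod_cast (by omega : 2 + a + b < 2 * n)
      have heval : ∀ s : ℝ, R.eval s = 2 * (1 - s^2) * ((q a).eval s * (q b).eval s) := by
        intro s
        simp [hR]
        ring
      have hq := hquad R hdeglt
      have hint : (∫ s in (-1:ℝ)..1, R.eval s * w s)
          = 2 * ∫ s in (-1:ℝ)..1, (q a).eval s * (q b).eval s * ((1 - s^2) * w s) := by
        rw [← intervalIntegral.integral_const_mul]
        apply intervalIntegral.integral_congr
        intro s _
        dsimp only
        rw [heval s]
        ring
      have horth := hqorth a (q b) (by rw [hqdeg b]; exact_mod_cast hba)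
      rw [hint, horth, mul_zero] at hq
      calc ∑ j, lam j * (2 * (1 - (t j)^2) * ((q a).eval (t j) * (q b).eval (t j)))
          = ∑ j, lam j * R.eval (t j) := by
            apply Finset.sum_congr rfl; intro j _; rw [heval (t j)]
        _ = 0 := hq.symm
    simp only [hform]
    rcases lt_or_gt_of_ne hkl with h | h
    · -- k < ℓ
      have := main (ℓ - 1) (k - 1) (by omega) (by omega)
      rw [← this]
      apply Finset.sum_congr rfl; intro j _; ring
    · exact main (k - 1) (ℓ - 1) (by omega) (by omega)
  · simp only [hform]
    intro hS
    have hterm : ∀ j ∈ Finset.univ,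
        (0:ℝ) ≤ lam j * (2 * (1 - (t j)^2) * ((q (n-1)).eval (t j) * (q (n-1)).eval (t j))) := by
      intro j _
      have h1 := hpos j
      have h2 := hlam_pos j
      nlinarith [mul_nonneg (mul_pos h2 (by nlinarith : (0:ℝ) < 2*(1 - t j^2))).le
        (mul_self_nonneg ((q (n-1)).eval (t j)))]
    have hzero : ∀ j : Fin n, (q (n-1)).eval (t j) = 0 := by
      intro j
      have hz := (Finset.sum_eq_zero_iff_of_nonneg hterm).mp hS j (Finset.mem_univ j)
      have h1 := hpos j
      have h2 := hlam_pos j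
      by_contra hE
      have hc : 0 < (q (n-1)).eval (t j) * (q (n-1)).eval (t j) := mul_self_pos.mpr hE
      nlinarith [mul_pos (mul_pos h2 (by nlinarith : (0:ℝ) < 2*(1 - t j^2))) hc]
    have hqne : q (n-1) ≠ 0 := by
      intro h
      have := hqdeg (n-1)
      rw [h, Polynomial.degree_zero] at this
      exact (by simp : (⊥ : WithBot ℕ) ≠ ((n-1 : ℕ) : WithBot ℕ)) this
    have hnat : (q (n-1)).natDegree = n - 1 :=
      Polynomial.natDegree_eq_of_degree_eq_some (hqdeg (n-1))
    have hsubset : (Finset.univ.image t) ⊆ (q (n-1)).roots.toFinset := by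
      intro x hx
      rcases Finset.mem_image.mp hx with ⟨j, _, rfl⟩
      rw [Multiset.mem_toFinset, Polynomial.mem_roots hqne]
      exact (by simpa [Polynomial.IsRoot] using hzero j)
    have hcard : n ≤ (q (n-1)).roots.toFinset.card := by
      have hc := Finset.card_le_card hsubset
      rwa [Finset.card_image_of_injective _ ht_inj, Finset.card_univ, Fintype.card_fin] at hc
    have hle : (q (n-1)).roots.toFinset.card ≤ n - 1 := by
      calc (q (n-1)).roots.toFinset.card ≤ Multiset.card (q (n-1)).roots :=
            (q (n-1)).roots.toFinset_card_le
        _ ≤ (q (n-1)).natDegree := Polynomial.card_roots' _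
        _ = n - 1 := hnat
    omega
end
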